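/- The operators K_0 := D_sym and K_1 := multiplication by z + z^{-1}, acting on symmetric Laurent polynomials, satisfy the AW(3) relation (q + q^{-1})K_1 K_0 K_1 − K_1² K_0 − K_0 K_1² = B·K_1 + C_0·K_0 + D_0, with structure constants B = (1 − q^{-1})²(e_3 + q·e_1), C_0 = (q − q^{-1})², D_0 = −q^{-3}(1−q)²(1+q)(e_4 + q·e_2 + q²). -/

import Mathlib

open scoped BigOperators

noncomputable section

/-- The field of rational functions over ℂ, in which Laurent polynomials live. -/
local notation "F" => RatFunc ℂ

/-- Scalar constants in `F`. -/
def Cc (x : ℂ) : F := RatFunc.C x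

/-- The variable `z`. -/
def Xv : F := RatFunc.X

/-- Substitution `z ↦ t` in a rational function (well defined since the
substitution points used here are transcendental over ℂ). -/
def subst (t : F) (f : F) : F := RatFunc.eval (RatFunc.C) t f

/-- `f` is a Laurent polynomial in `z`. -/
def IsLaurent (f : F) : Prop :=
  ∃ (p : Polynomial ℂ) (n : ℕ), f = algebraMap (Polynomial ℂ) F p / Xv ^ n

/-- The DAHA operator `T₁` of the basic representation. -/
def T1op (a b : ℂ) (f : F) : F :=
  ((Cc a + Cc b) * Xv - (1 + Cc a * Cc b)) / (1 - Xv ^ 2) * f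
    + ((1 - Cc a * Xv) * (1 - Cc b * Xv)) / (1 - Xv ^ 2) * subst Xv⁻¹ f

/-- The DAHA operator `T₀` of the basic representation. -/
def T0op (q c d : ℂ) (f : F) : F :=
  (Cc q)⁻¹ * Xv * ((Cc c * Cc d + Cc q) * Xv - (Cc c + Cc d) * Cc q) / (Cc q - Xv ^ 2) * f
    - ((Cc c - Xv) * (Cc d - Xv)) / (Cc q - Xv ^ 2) * subst (Cc q * Xv⁻¹) f

/-- The inverse of `T₁`: `T₁⁻¹ = -(ab)⁻¹T₁ - (1 + (ab)⁻¹)`. -/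
def T1inv (a b : ℂ) (f : F) : F :=
  -(Cc a * Cc b)⁻¹ * T1op a b f - (1 + (Cc a * Cc b)⁻¹) * f

/-- The inverse of `T₀`: `T₀⁻¹ = -q(cd)⁻¹T₀ - (1 + q(cd)⁻¹)`. -/
def T0inv (q c d : ℂ) (f : F) : F :=
  -(Cc q * (Cc c * Cc d)⁻¹) * T0op q c d f - (1 + Cc q * (Cc c * Cc d)⁻¹) * f

/-- `Y = T₁T₀`. -/
def Yop (q a b c d : ℂ) (f : F) : F := T1op a b (T0op q c d f)

/-- `Y⁻¹ = T₀⁻¹T₁⁻¹`. -/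
def Yinv (q a b c d : ℂ) (f : F) : F := T0inv q c d (T1inv a b f)

/-- `D = Y + q⁻¹abcd·Y⁻¹`. -/
def Dop (q a b c d : ℂ) (f : F) : F :=
  Yop q a b c d f + Cc (q⁻¹ * (a * b * c * d)) * Yinv q a b c d f

/-- The Askey–Wilson second order q-difference operator `D_sym`. -/
def DsymOp (q a b c d : ℂ) (f : F) : F :=
  ((1 - Cc a * Xv) * (1 - Cc b * Xv) * (1 - Cc c * Xv) * (1 - Cc d * Xv)) /
      ((1 - Xv ^ 2) * (1 - Cc q * Xv ^ 2)) * (subst (Cc q * Xv) f - f)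
    + ((Cc a - Xv) * (Cc b - Xv) * (Cc c - Xv) * (Cc d - Xv)) /
      ((1 - Xv ^ 2) * (Cc q - Xv ^ 2)) * (subst ((Cc q)⁻¹ * Xv) f - f)
    + (1 + (Cc q)⁻¹ * Cc a * Cc b * Cc c * Cc d) * f

/-- q-Pochhammer symbol `(x;q)_k`. -/
def qPoch (x q : ℂ) (k : ℕ) : ℂ := ∏ j ∈ Finset.range k, (1 - x * q ^ j)

/-- The monic Askey–Wilson Laurent polynomial `P_n[z;a,b,c,d|q]`. -/
def AWP (q a b c d : ℂ) (n : ℕ) : F :=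
  Cc (a⁻¹ ^ n) * ∑ k ∈ Finset.range (n + 1),
    Cc (qPoch (q⁻¹ ^ n) q k * qPoch (a * b * q ^ k) q (n - k) * qPoch (a * c * q ^ k) q (n - k)
        * qPoch (a * d * q ^ k) q (n - k) * q ^ k
        / (qPoch q q k * qPoch (a * b * c * d * q ^ (n + k) / q) q (n - k)))
      * (∏ j ∈ Finset.range k, (1 - Cc a * Xv * Cc (q ^ j)))
      * (∏ j ∈ Finset.range k, (1 - Cc a * Xv⁻¹ * Cc (q ^ j)))

/-- `Q_n[z] := (ab)⁻¹ z⁻¹ (1-az)(1-bz) P_{n-1}[z;qa,qb,c,d|q]`. -/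
def Qpoly (q a b c d : ℂ) (n : ℕ) : F :=
  (Cc (a * b))⁻¹ * Xv⁻¹ * (1 - Cc a * Xv) * (1 - Cc b * Xv) *
    AWP q (q * a) (q * b) c d (n - 1)

/-- Elementary symmetric polynomials in a,b,c,d. -/
def esym1 (a b c d : ℂ) : ℂ := a + b + c + d
def esym2 (a b c d : ℂ) : ℂ := a*b + a*c + b*c + a*d + b*d + c*d
def esym3 (a b c d : ℂ) : ℂ := a*b*c + a*b*d + a*c*d + b*c*d
def esym4 (a b c d : ℂ) : ℂ := a*b*c*d


lemma Xv_pow_eq (n : ℕ) : (Xv : F) ^ n = algebraMap (Polynomial ℂ) F (Polynomial.X ^ n) := by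
  simp [Xv, map_pow]

lemma subst_div_pow (t : F) (ht : t ≠ 0) (p : Polynomial ℂ) (n : ℕ) :
    subst t (algebraMap (Polynomial ℂ) F p / Xv ^ n)
      = Polynomial.eval₂ RatFunc.C t p / t ^ n := by
  set g : F := algebraMap (Polynomial ℂ) F p / Xv ^ n with hg
  have hXn : (Xv:F) ^ n ≠ 0 := pow_ne_zero _ (by simpa [Xv] using RatFunc.X_ne_zero (K := ℂ))
  have hgden : Polynomial.eval₂ RatFunc.C t g.denom ≠ 0 := by
    have hdvd : g.denom ∣ Polynomial.X ^ n := by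
      rw [hg, Xv_pow_eq]; exact RatFunc.denom_div_dvd p _
    obtain ⟨s, hs⟩ := hdvd
    intro h0
    have := congrArg (Polynomial.eval₂ RatFunc.C t) hs
    rw [Polynomial.eval₂_mul, h0, zero_mul, Polynomial.eval₂_pow, Polynomial.eval₂_X] at this
    exact pow_ne_zero n ht this
  have hXden : Polynomial.eval₂ RatFunc.C t ((Xv:F)^n).denom ≠ 0 := by
    rw [Xv_pow_eq, RatFunc.denom_algebraMap]
    simp
  have hmul : g * Xv ^ n = algebraMap (Polynomial ℂ) F p := by
    rw [hg, div_mul_cancel₀ _ hXn]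
  have := congrArg (subst t) hmul
  rw [show subst t (g * Xv ^ n) = subst t g * subst t (Xv ^ n) from
    RatFunc.eval_mul (f := RatFunc.C) (a := t) hgden hXden] at this
  have hXeval : subst t ((Xv:F) ^ n) = t ^ n := by
    rw [Xv_pow_eq, subst, RatFunc.eval_algebraMap]
    simp
  have hpeval : subst t (algebraMap (Polynomial ℂ) F p) = Polynomial.eval₂ RatFunc.C t p := by
    simp [subst]
  rw [hXeval, hpeval] at this
  field_simp [ht] at this ⊢
  linear_combination this

lemma K_rep (p : Polynomial ℂ) (n : ℕ) :
    ((Xv:F) + Xv⁻¹) * (algebraMap (Polynomial ℂ) F p / Xv ^ n)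
      = algebraMap (Polynomial ℂ) F ((Polynomial.X ^ 2 + 1) * p) / Xv ^ (n + 1) := by
  have hX : (Xv:F) ≠ 0 := by simpa [Xv] using RatFunc.X_ne_zero (K := ℂ)
  rw [map_mul, map_add, map_pow, map_one, RatFunc.algebraMap_X]
  show ((Xv:F) + Xv⁻¹) * (algebraMap (Polynomial ℂ) F p / Xv ^ n)
      = ((Xv:F) ^ 2 + 1) * algebraMap (Polynomial ℂ) F p / Xv ^ (n + 1)
  field_simp
  ring

lemma isLaurent_K {f : F} (hf : IsLaurent f) : IsLaurent (((Xv:F) + Xv⁻¹) * f) := by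
  obtain ⟨p, n, rfl⟩ := hf
  exact ⟨(Polynomial.X ^ 2 + 1) * p, n + 1, K_rep p n⟩

lemma subst_K (t : F) (ht : t ≠ 0) {f : F} (hf : IsLaurent f) :
    subst t (((Xv:F) + Xv⁻¹) * f) = (t + t⁻¹) * subst t f := by
  obtain ⟨p, n, rfl⟩ := hf
  rw [K_rep, subst_div_pow t ht, subst_div_pow t ht, Polynomial.eval₂_mul,
    Polynomial.eval₂_add, Polynomial.eval₂_pow, Polynomial.eval₂_X, Polynomial.eval₂_one]
  field_simp
  ring

set_option maxHeartbeats 4000000 in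
theorem stmt10 (q a b c d : ℂ) (hq : q ≠ 0) (hroot : ∀ m : ℕ, 1 ≤ m → q ^ m ≠ 1)
    (ha : a ≠ 0) (hb : b ≠ 0) (hc : c ≠ 0) (hd : d ≠ 0) :
    ∀ f : RatFunc ℂ, IsLaurent f → subst Xv⁻¹ f = f →
      Cc (q + q⁻¹) * ((Xv + Xv⁻¹) * DsymOp q a b c d ((Xv + Xv⁻¹) * f))
        - (Xv + Xv⁻¹) * ((Xv + Xv⁻¹) * DsymOp q a b c d f)
        - DsymOp q a b c d ((Xv + Xv⁻¹) * ((Xv + Xv⁻¹) * f))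
      = Cc ((1 - q⁻¹) ^ 2 * (esym3 a b c d + q * esym1 a b c d)) * ((Xv + Xv⁻¹) * f)
        + Cc ((q - q⁻¹) ^ 2) * DsymOp q a b c d f
        + Cc (-(q ^ (-3 : ℤ)) * (1 - q) ^ 2 * (1 + q) *
            (esym4 a b c d + q * esym2 a b c d + q ^ 2)) * f := by
  intro f hf _
  have hX : (Xv:F) ≠ 0 := by simpa [Xv] using RatFunc.X_ne_zero (K := ℂ)
  have hCq : (Cc q : F) ≠ 0 := by
    simpa [Cc] using (map_ne_zero (RatFunc.C : ℂ →+* RatFunc ℂ)).mpr hq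
  have ht1 : (Cc q * Xv : F) ≠ 0 := mul_ne_zero hCq hX
  have ht2 : ((Cc q)⁻¹ * Xv : F) ≠ 0 := mul_ne_zero (inv_ne_zero hCq) hX
  have hf2 : IsLaurent (((Xv:F) + Xv⁻¹) * f) := isLaurent_K hf
  have h1 : ((1:F) - Xv ^ 2) ≠ 0 := by
    have hp : (1 - Polynomial.X ^ 2 : Polynomial ℂ) ≠ 0 := by
      intro h; have := congrArg (Polynomial.eval 0) h; simp at this
    have : ((1:F) - Xv ^ 2) = algebraMap (Polynomial ℂ) F (1 - Polynomial.X ^ 2) := by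
      rw [map_sub, map_one, map_pow, RatFunc.algebraMap_X]; rfl
    rw [this]
    exact RatFunc.algebraMap_ne_zero hp
  have h2 : ((1:F) - Cc q * Xv ^ 2) ≠ 0 := by
    have hp : (1 - Polynomial.C q * Polynomial.X ^ 2 : Polynomial ℂ) ≠ 0 := by
      intro h; have := congrArg (Polynomial.eval 0) h; simp at this
    have : ((1:F) - Cc q * Xv ^ 2)
        = algebraMap (Polynomial ℂ) F (1 - Polynomial.C q * Polynomial.X ^ 2) := by
      rw [map_sub, map_one, map_mul, map_pow, RatFunc.algebraMap_X, RatFunc.algebraMap_C, Cc]; rfl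
    rw [this]
    exact RatFunc.algebraMap_ne_zero hp
  have h3 : ((Cc q : F) - Xv ^ 2) ≠ 0 := by
    have hp : (Polynomial.C q - Polynomial.X ^ 2 : Polynomial ℂ) ≠ 0 := by
      intro h; have := congrArg (Polynomial.eval 0) h; simp [hq] at this
    have : ((Cc q : F) - Xv ^ 2)
        = algebraMap (Polynomial ℂ) F (Polynomial.C q - Polynomial.X ^ 2) := by
      rw [map_sub, map_pow, RatFunc.algebraMap_X, RatFunc.algebraMap_C, Cc]; rfl
    rw [this]
    exact RatFunc.algebraMap_ne_zero hp
  rw [DsymOp, DsymOp, DsymOp,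
    subst_K _ ht1 hf2, subst_K _ ht2 hf2,
    subst_K _ ht1 hf, subst_K _ ht2 hf]
  set A := subst (Cc q * Xv) f with hA
  set B := subst ((Cc q)⁻¹ * Xv) f with hB
  simp only [Cc, esym1, esym2, esym3, esym4, map_add, map_mul, map_sub, map_neg,
    map_one, map_pow, map_inv₀, map_zpow₀]
  simp only [Cc] at hCq h1 h2 h3
  have hz3 : (RatFunc.C q : F) ^ (-3 : ℤ) = ((RatFunc.C q) ^ 3)⁻¹ := by
    rw [zpow_neg, zpow_ofNat]
  rw [hz3]
  have hu : (RatFunc.C q + (RatFunc.C q)⁻¹ : F) *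
        ((Xv + Xv⁻¹) * (RatFunc.C q * Xv + (RatFunc.C q * Xv)⁻¹))
      = (Xv + Xv⁻¹) ^ 2 + (RatFunc.C q * Xv + (RatFunc.C q * Xv)⁻¹) ^ 2
        + (RatFunc.C q - (RatFunc.C q)⁻¹) ^ 2 := by
    field_simp
    ring
  have hv : (RatFunc.C q + (RatFunc.C q)⁻¹ : F) *
        ((Xv + Xv⁻¹) * ((RatFunc.C q)⁻¹ * Xv + ((RatFunc.C q)⁻¹ * Xv)⁻¹))
      = (Xv + Xv⁻¹) ^ 2 + ((RatFunc.C q)⁻¹ * Xv + ((RatFunc.C q)⁻¹ * Xv)⁻¹) ^ 2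
        + (RatFunc.C q - (RatFunc.C q)⁻¹) ^ 2 := by
    field_simp
    ring
  have hS : ((1 - RatFunc.C a * Xv) * (1 - RatFunc.C b * Xv) * (1 - RatFunc.C c * Xv) *
          (1 - RatFunc.C d * Xv) / ((1 - Xv ^ 2) * (1 - RatFunc.C q * Xv ^ 2))
        + (RatFunc.C a - Xv) * (RatFunc.C b - Xv) * (RatFunc.C c - Xv) * (RatFunc.C d - Xv) /
          ((1 - Xv ^ 2) * (RatFunc.C q - Xv ^ 2))
        - (1 + (RatFunc.C q)⁻¹ * RatFunc.C a * RatFunc.C b * RatFunc.C c * RatFunc.C d))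
      * ((2 - (RatFunc.C q + (RatFunc.C q)⁻¹)) * (Xv + Xv⁻¹) ^ 2
          + (RatFunc.C q - (RatFunc.C q)⁻¹) ^ 2)
    = (1 - (RatFunc.C q)⁻¹) ^ 2 *
        (RatFunc.C a * RatFunc.C b * RatFunc.C c + RatFunc.C a * RatFunc.C b * RatFunc.C d
          + RatFunc.C a * RatFunc.C c * RatFunc.C d + RatFunc.C b * RatFunc.C c * RatFunc.C d
          + RatFunc.C q * (RatFunc.C a + RatFunc.C b + RatFunc.C c + RatFunc.C d)) * (Xv + Xv⁻¹)
      + -((RatFunc.C q ^ 3)⁻¹) * (1 - RatFunc.C q) ^ 2 * (1 + RatFunc.C q) *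
        (RatFunc.C a * RatFunc.C b * RatFunc.C c * RatFunc.C d
          + RatFunc.C q * (RatFunc.C a * RatFunc.C b + RatFunc.C a * RatFunc.C c
            + RatFunc.C b * RatFunc.C c + RatFunc.C a * RatFunc.C d + RatFunc.C b * RatFunc.C d
            + RatFunc.C c * RatFunc.C d) + RatFunc.C q ^ 2) := by
    have h2' : (1 - Xv ^ 2 * RatFunc.C q : F) ≠ 0 := by rwa [mul_comm]
    field_simp
    ring
  linear_combination
    ((1 - RatFunc.C a * Xv) * (1 - RatFunc.C b * Xv) * (1 - RatFunc.C c * Xv) *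
        (1 - RatFunc.C d * Xv) / ((1 - Xv ^ 2) * (1 - RatFunc.C q * Xv ^ 2)) * A) * hu
    + ((RatFunc.C a - Xv) * (RatFunc.C b - Xv) * (RatFunc.C c - Xv) * (RatFunc.C d - Xv) /
        ((1 - Xv ^ 2) * (RatFunc.C q - Xv ^ 2)) * B) * hv
    + f * hS

end
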